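/- Let n ≥ 1, let a : Fin n → ℝ → ℝ be n-times continuously differentiable on an open set I ⊆ ℝ, and let p_1, …, p_n : ℝ → ℝ satisfy, for all j and all x ∈ I, (d/dx)^n a_j(x) = ∑_{i=1}^{n} p_i(x) · (d/dx)^{n−i} a_j(x). Then for every x ∈ I with det W(x) ≠ 0, the determinant of the Maurer–Cartan matrix equals, up to sign, the last ODE coefficient: det(W'(x) · (W(x))⁻¹) = (−1)^{n−1} · p_n(x). -/

import Mathlib

open Matrix

/-- The Wronskian matrix of a family of functions `a : Fin n → ℝ → ℝ`:
entry `(i, j)` is the `i`-th iterated derivative of `a j` at `x`. -/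
noncomputable def wronskianMatrix (n : ℕ) (a : Fin n → ℝ → ℝ) (x : ℝ) :
    Matrix (Fin n) (Fin n) ℝ :=
  Matrix.of fun i j => iteratedDeriv (i : ℕ) (a j) x

/-- The entrywise derivative of the Wronskian matrix. -/
noncomputable def wronskianMatrixDeriv (n : ℕ) (a : Fin n → ℝ → ℝ) (x : ℝ) :
    Matrix (Fin n) (Fin n) ℝ :=
  Matrix.of fun i j => deriv (fun t => wronskianMatrix n a t i j) x

lemma iteratedDerivWithin_of_isOpen' {I : Set ℝ} (hI : IsOpen I) {f : ℝ → ℝ} {x : ℝ}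
    (hx : x ∈ I) (i : ℕ) : iteratedDerivWithin i f I x = iteratedDeriv i f x := by
  rw [iteratedDerivWithin_eq_iteratedFDerivWithin, iteratedDeriv_eq_iteratedFDeriv,
    iteratedFDerivWithin_of_isOpen i hI hx]

lemma deriv_iteratedDeriv_open {I : Set ℝ} (hI : IsOpen I) {f : ℝ → ℝ} {x : ℝ} (hx : x ∈ I)
    (i : ℕ) : deriv (fun t => iteratedDeriv i f t) x = iteratedDeriv (i + 1) f x := by
  have h1 : Set.EqOn (iteratedDerivWithin i f I) (iteratedDeriv i f) I :=
    fun y hy => iteratedDerivWithin_of_isOpen' hI hy i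
  calc deriv (fun t => iteratedDeriv i f t) x
      = derivWithin (iteratedDeriv i f) I x := (derivWithin_of_isOpen hI hx).symm
    _ = derivWithin (iteratedDerivWithin i f I) I x := derivWithin_congr h1.symm (h1 hx).symm
    _ = iteratedDerivWithin (i + 1) f I x := (congrFun iteratedDerivWithin_succ
        x).symm
    _ = iteratedDeriv (i + 1) f x := iteratedDerivWithin_of_isOpen' hI hx (i + 1)

theorem det_maurerCartan (n : ℕ) (hn : 1 ≤ n)
    (I : Set ℝ) (hI : IsOpen I)
    (a : Fin n → ℝ → ℝ) (ha : ∀ j, ContDiffOn ℝ (n : ℕ∞) (a j) I)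
    (p : Fin n → ℝ → ℝ)
    (hODE : ∀ j, ∀ x ∈ I,
      iteratedDeriv n (a j) x = ∑ i : Fin n, p i x * iteratedDeriv (n - 1 - (i : ℕ)) (a j) x)
    (x : ℝ) (hx : x ∈ I) (hdet : (wronskianMatrix n a x).det ≠ 0) :
    (wronskianMatrixDeriv n a x * (wronskianMatrix n a x)⁻¹).det =
      (-1 : ℝ) ^ (n - 1) * p ⟨n - 1, by omega⟩ x := by
  obtain ⟨m, rfl⟩ : ∃ m, n = m + 1 := ⟨n - 1, by omega⟩
  set W := wronskianMatrix (m + 1) a x with hW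
  set E : Matrix (Fin (m + 1)) (Fin (m + 1)) ℝ := Matrix.of fun i k =>
    if (i : ℕ) = m then p k.rev x else if (k : ℕ) = (i : ℕ) + 1 then 1 else 0 with hE
  have hEW : wronskianMatrixDeriv (m + 1) a x = E * W := by
    ext i j
    rw [Matrix.mul_apply]
    have hderiv : wronskianMatrixDeriv (m + 1) a x i j = iteratedDeriv ((i : ℕ) + 1) (a j) x := by
      simp only [wronskianMatrixDeriv, wronskianMatrix, Matrix.of_apply]
      exact deriv_iteratedDeriv_open hI hx _
    by_cases him : (i : ℕ) = m
    · rw [hderiv, him]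
      have : ∀ k : Fin (m + 1), E i k * W k j = p k.rev x * iteratedDeriv (k : ℕ) (a j) x := by
        intro k
        simp [hE, hW, wronskianMatrix, him]
      rw [Finset.sum_congr rfl fun k _ => this k]
      rw [hODE j x hx]
      refine Fintype.sum_equiv Fin.revPerm _ _ fun k => ?_
      simp [Fin.rev_rev, Fin.val_rev]
    · rw [hderiv]
      have hi1 : (i : ℕ) + 1 < m + 1 := by omega
      have : ∀ k : Fin (m + 1), E i k * W k j =
          if k = (⟨(i : ℕ) + 1, hi1⟩ : Fin (m + 1)) then iteratedDeriv ((i : ℕ) + 1) (a j) x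
          else 0 := by
        intro k
        simp only [hE, hW, wronskianMatrix, Matrix.of_apply, him, if_false]
        by_cases hk : k = (⟨(i : ℕ) + 1, hi1⟩ : Fin (m + 1))
        · subst hk; simp
        · have : ¬ ((k : ℕ) = (i : ℕ) + 1) := fun h => hk (Fin.ext h)
          simp [this, hk]
      rw [Finset.sum_congr rfl fun k _ => this k, Finset.sum_ite_eq' Finset.univ]
      simp
  have hdetE : E.det = (-1 : ℝ) ^ m * p (Fin.last m) x := by
    rw [Matrix.det_succ_column_zero]
    rw [Finset.sum_eq_single (Fin.last m)]
    · have h0 : E (Fin.last m) 0 = p (Fin.last m) x := by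
        simp [hE, Fin.rev_zero]
      have hsub : E.submatrix (Fin.last m).succAbove Fin.succ = 1 := by
        ext i j
        simp only [Matrix.submatrix_apply, Fin.succAbove_last, hE, Matrix.of_apply,
          Matrix.one_apply, Fin.coe_castSucc, Fin.val_succ]
        have hi := i.isLt
        rw [if_neg (by omega : ¬ ((i : ℕ) = m))]
        by_cases hij : i = j
        · simp [hij]
        · rw [if_neg (fun h => hij (Fin.ext (by omega))), if_neg hij]
      rw [h0, hsub, Matrix.det_one]
      simp [Fin.val_last]
    · intro i _ hi
      have : E i 0 = 0 := by
        have him : ¬ ((i : ℕ) = m) := fun h => hi (Fin.ext (by simp [h, Fin.val_last]))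
        simp [hE, him]
      simp [this]
    · simp
  have hunit : IsUnit W.det := isUnit_iff_ne_zero.mpr hdet
  rw [hEW, Matrix.mul_assoc, Matrix.mul_nonsing_inv _ hunit, Matrix.mul_one, hdetE]
  rfl
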